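/- Let K_1, K_2 be convex bodies in ℝ^d with K_2 contained in the interior of K_1, and let X be a finite point set in K_1. Then L(X) ≤ max{|X ∩ C| : C a cap of K_1 \ K_2} + L(X ∩ K_2), where a cap of K_1 \ K_2 is a set of the form K_1 ∩ H^+ for H^+ a closed halfspace whose bounding hyperplane is tangent to K_2 (i.e., touches the boundary of K_2 and whose interior is disjoint from K_2). -/

import Mathlib

open scoped Classical RealInnerProductSpace
open Metric MeasureTheory

/-- The set of extreme points (convex-layer vertices) of a finite point set. -/
noncomputable def extremePts {d : ℕ} (S : Finset (EuclideanSpace ℝ (Fin d))) :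
    Finset (EuclideanSpace ℝ (Fin d)) :=
  S.filter fun x =>
    x ∉ convexHull ℝ ((S.erase x : Finset (EuclideanSpace ℝ (Fin d))) :
      Set (EuclideanSpace ℝ (Fin d)))

/-- `peel S k` is the set of points remaining after `k` peeling steps, i.e. `X_{k+1}`. -/
noncomputable def peel {d : ℕ} (S : Finset (EuclideanSpace ℝ (Fin d))) :
    ℕ → Finset (EuclideanSpace ℝ (Fin d))
  | 0 => S
  | k + 1 => peel S k \ extremePts (peel S k)

/-- The layer number: the number of peeling steps needed to remove all points. -/
noncomputable def layerNum {d : ℕ} (S : Finset (EuclideanSpace ℝ (Fin d))) : ℕ :=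
  sInf {k | peel S k = ∅}

variable {d : ℕ}

/-- key: a nonempty finite set has an extreme point maximizing any linear functional. -/
lemma exists_extreme_max (S : Finset (EuclideanSpace ℝ (Fin d))) (hS : S.Nonempty)
    (u : EuclideanSpace ℝ (Fin d)) :
    ∃ y ∈ extremePts S, ∀ z ∈ S, ⟪z, u⟫ ≤ ⟪y, u⟫ := by
  have hAcpt : IsCompact (convexHull ℝ (S : Set (EuclideanSpace ℝ (Fin d)))) :=
    S.finite_toSet.isCompact_convexHull ℝ
  obtain ⟨x₀, hx₀⟩ := hS
  have hAne : (convexHull ℝ (S : Set (EuclideanSpace ℝ (Fin d)))).Nonempty :=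
    ⟨x₀, subset_convexHull ℝ _ hx₀⟩
  have hBexp : IsExposed ℝ (convexHull ℝ (S : Set (EuclideanSpace ℝ (Fin d))))
      ((innerSL ℝ u).toExposed (convexHull ℝ (S : Set (EuclideanSpace ℝ (Fin d))))) :=
    ContinuousLinearMap.toExposed.isExposed
  have hBne : ((innerSL ℝ u).toExposed
      (convexHull ℝ (S : Set (EuclideanSpace ℝ (Fin d))))).Nonempty := by
    obtain ⟨z, hz, hmax⟩ := hAcpt.exists_isMaxOn hAne (innerSL ℝ u).continuous.continuousOn
    exact ⟨z, hz, fun w hw => hmax hw⟩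
  have hBcpt := hBexp.isCompact hAcpt
  obtain ⟨y, hy⟩ := hBcpt.extremePoints_nonempty hBne
  have hyA : y ∈ (convexHull ℝ (S : Set (EuclideanSpace ℝ (Fin d)))).extremePoints ℝ :=
    (hBexp.isExtreme).extremePoints_subset_extremePoints hy
  have hyS : y ∈ S := extremePoints_convexHull_subset hyA
  have hyB := hy.1
  refine ⟨y, ?_, fun z hz => ?_⟩
  · rw [extremePts, Finset.mem_filter]
    refine ⟨hyS, fun hcon => ?_⟩
    have h1 := ((convex_convexHull ℝ (S : Set (EuclideanSpace ℝ (Fin d)))).mem_extremePoints_iff_mem_diff_convexHull_diff).1 hyA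
    refine h1.2 ?_
    refine convexHull_mono ?_ (by rwa [Finset.coe_erase] at hcon)
    intro w hw
    exact ⟨subset_convexHull ℝ _ hw.1, hw.2⟩
  · have h2 := hyB.2 z (subset_convexHull ℝ _ hz)
    simp only [ContinuousLinearMap.toExposed, innerSL_apply_apply] at h2
    exact le_of_eq_of_le (real_inner_comm u z) (le_of_le_of_eq h2 (real_inner_comm y u))

lemma peel_succ (S : Finset (EuclideanSpace ℝ (Fin d))) (k : ℕ) :
    peel S (k + 1) = peel S k \ extremePts (peel S k) := rfl

lemma peel_mono {S' S : Finset (EuclideanSpace ℝ (Fin d))} (h : S' ⊆ S) (k : ℕ) :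
    peel S' k ⊆ peel S k := by
  induction k with
  | zero => exact h
  | succ k ih =>
    intro x hx
    rw [peel_succ, Finset.mem_sdiff] at hx ⊢
    refine ⟨ih hx.1, fun hext => ?_⟩
    have hx1 := hx.1
    have hnon : x ∈ convexHull ℝ (((peel S' k).erase x : Finset _) :
        Set (EuclideanSpace ℝ (Fin d))) := by
      by_contra hc
      exact hx.2 (Finset.mem_filter.2 ⟨hx1, hc⟩)
    rw [extremePts, Finset.mem_filter] at hext
    exact hext.2 (convexHull_mono (by exact_mod_cast Finset.erase_subset_erase x ih) hnon)

lemma peel_succ_subset (S : Finset (EuclideanSpace ℝ (Fin d))) (k : ℕ) :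
    peel S (k + 1) ⊆ peel S k := by
  rw [peel_succ]; exact Finset.sdiff_subset

lemma peel_anti (S : Finset (EuclideanSpace ℝ (Fin d))) {j k : ℕ} (h : j ≤ k) :
    peel S k ⊆ peel S j := by
  induction k with
  | zero => simpa [Nat.le_zero.1 h]
  | succ k ih =>
    rcases Nat.lt_or_ge j (k+1) with hlt | hge
    · exact (peel_succ_subset S k).trans (ih (Nat.lt_succ_iff.1 hlt))
    · have : j = k + 1 := le_antisymm h hge
      subst this; exact subset_rfl

lemma peel_subset (S : Finset (EuclideanSpace ℝ (Fin d))) (k : ℕ) :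
    peel S k ⊆ S := peel_anti S (Nat.zero_le k)

lemma peel_card_bound (S : Finset (EuclideanSpace ℝ (Fin d))) (k : ℕ)
    (h : (peel S k).Nonempty) : (peel S k).card + k ≤ S.card := by
  induction k with
  | zero => simp [peel]
  | succ k ih =>
    have hk : (peel S k).Nonempty := h.mono (peel_succ_subset S k)
    obtain ⟨y, hy, -⟩ := exists_extreme_max (peel S k) hk 0
    have hy' : y ∈ peel S k := by
      rw [extremePts, Finset.mem_filter] at hy; exact hy.1
    have hsub : peel S (k+1) ⊆ (peel S k).erase y := by
      intro z hz
      rw [peel_succ, Finset.mem_sdiff] at hz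
      exact Finset.mem_erase.2 ⟨fun hzy => hz.2 (hzy ▸ hy), hz.1⟩
    have h1 : (peel S (k+1)).card + 1 ≤ (peel S k).card := by
      have := Finset.card_le_card hsub
      have h2 := Finset.card_erase_lt_of_mem hy'
      omega
    have := ih hk
    omega

lemma peel_eventually_empty (S : Finset (EuclideanSpace ℝ (Fin d))) :
    peel S S.card = ∅ := by
  by_contra h
  have := peel_card_bound S S.card (Finset.nonempty_iff_ne_empty.2 h)
  have : (peel S S.card).card = 0 := by omega
  exact h (Finset.card_eq_zero.1 this)

lemma layerNum_spec (S : Finset (EuclideanSpace ℝ (Fin d))) :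
    peel S (layerNum S) = ∅ :=
  Nat.sInf_mem (⟨S.card, peel_eventually_empty S⟩ : {k | peel S k = ∅}.Nonempty)

lemma peel_add (S : Finset (EuclideanSpace ℝ (Fin d))) (m k : ℕ) :
    peel S (m + k) = peel (peel S m) k := by
  induction k with
  | zero => rfl
  | succ k ih => rw [← Nat.add_assoc, peel_succ, ih, peel_succ]

lemma peel_subset_K₂ {d : ℕ} (K₂ : Set (EuclideanSpace ℝ (Fin d)))
    (hK₂cpt : IsCompact K₂) (hK₂cvx : Convex ℝ K₂) (hK₂ne : K₂.Nonempty)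
    (X : Finset (EuclideanSpace ℝ (Fin d))) (m : ℕ)
    (hm : ∀ (u : EuclideanSpace ℝ (Fin d)), u ≠ 0 → ∀ c : ℝ,
      (∃ p ∈ frontier K₂, ⟪p, u⟫ = c) →
      (∀ q ∈ K₂, ⟪q, u⟫ ≤ c) →
      (X.filter fun x => c ≤ ⟪x, u⟫).card ≤ m) :
    ∀ x ∈ peel X m, x ∈ K₂ := by
  intro x hxm
  by_contra hxK₂
  -- separate x from K₂
  obtain ⟨f, s, hfs, hsx⟩ :=
    geometric_hahn_banach_closed_point hK₂cvx hK₂cpt.isClosed hxK₂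
  set u : EuclideanSpace ℝ (Fin d) :=
    (InnerProductSpace.toDual ℝ (EuclideanSpace ℝ (Fin d))).symm f with hu
  have hfu : ∀ z, ⟪z, u⟫ = f z := fun z => by
    rw [real_inner_comm]; exact InnerProductSpace.toDual_symm_apply
  have hune : u ≠ 0 := by
    intro h0
    obtain ⟨q, hq⟩ := hK₂ne
    have h1 := hfs q hq
    have h2 : f q = ⟪q, u⟫ := (hfu q).symm
    have h3 : f x = ⟪x, u⟫ := (hfu x).symm
    rw [h0] at h2 h3
    simp at h2 h3
    linarith
  -- max of f on K₂
  obtain ⟨p, hpK₂, hpmax⟩ := hK₂cpt.exists_isMaxOn hK₂ne f.continuous.continuousOn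
  set c : ℝ := ⟪p, u⟫ with hc
  have hcq : ∀ q ∈ K₂, ⟪q, u⟫ ≤ c := by
    intro q hq; rw [hfu, hc, hfu]; exact hpmax hq
  have hpfr : p ∈ frontier K₂ := by
    rw [frontier, hK₂cpt.isClosed.closure_eq]
    refine ⟨hpK₂, fun hpint => ?_⟩
    obtain ⟨ε, hε, hball⟩ := Metric.isOpen_iff.1 isOpen_interior p hpint
    have hun : ‖u‖ > 0 := norm_pos_iff.2 hune
    set t : ℝ := ε / (2 * ‖u‖) with ht
    have htpos : 0 < t := by positivity
    have hmem : p + t • u ∈ K₂ := by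
      refine interior_subset (hball ?_)
      rw [Metric.mem_ball, dist_eq_norm]
      have : p + t • u - p = t • u := by abel
      rw [this, norm_smul, Real.norm_eq_abs, abs_of_pos htpos, ht]
      rw [div_mul_eq_mul_div, mul_comm]
      rw [div_lt_iff₀ (by positivity)]
      nlinarith
    have := hcq _ hmem
    rw [inner_add_left, real_inner_smul_left, real_inner_self_eq_norm_sq, hc] at this
    nlinarith [mul_pos htpos (pow_pos hun 2)]
  have hcx : c ≤ ⟪x, u⟫ := by
    rw [hfu x, hc, hfu p]
    exact le_of_lt ((hfs p hpK₂).trans hsx)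
  have hcard := hm u hune c ⟨p, hpfr, rfl⟩ hcq
  -- counting argument
  have key : ∀ j, j ≤ m →
      ((peel X j).filter fun z => c ≤ ⟪z, u⟫).card + j ≤
        (X.filter fun z => c ≤ ⟪z, u⟫).card := by
    intro j hj
    induction j with
    | zero => simp [peel]
    | succ j ih =>
      have hj' : j ≤ m := Nat.le_of_succ_le hj
      have ihj := ih hj'
      have hxj : x ∈ peel X j := peel_anti X hj' hxm
      obtain ⟨y, hyext, hymax⟩ := exists_extreme_max (peel X j) ⟨x, hxj⟩ u
      have hy' : y ∈ peel X j := by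
        rw [extremePts, Finset.mem_filter] at hyext; exact hyext.1
      have hyc : c ≤ ⟪y, u⟫ := hcx.trans (hymax x hxj)
      have hymem : y ∈ (peel X j).filter fun z => c ≤ ⟪z, u⟫ :=
        Finset.mem_filter.2 ⟨hy', hyc⟩
      have hsub : ((peel X (j+1)).filter fun z => c ≤ ⟪z, u⟫) ⊆
          ((peel X j).filter fun z => c ≤ ⟪z, u⟫).erase y := by
        intro z hz
        rw [Finset.mem_filter, peel_succ, Finset.mem_sdiff] at hz
        refine Finset.mem_erase.2 ⟨fun hzy => hz.1.2 (hzy ▸ hyext), ?_⟩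
        exact Finset.mem_filter.2 ⟨hz.1.1, hz.2⟩
      have h1 := Finset.card_le_card hsub
      have h2 := Finset.card_erase_lt_of_mem hymem
      omega
  have hfin := key m le_rfl
  have hxmem : x ∈ (peel X m).filter fun z => c ≤ ⟪z, u⟫ :=
    Finset.mem_filter.2 ⟨hxm, hcx⟩
  have : 1 ≤ ((peel X m).filter fun z => c ≤ ⟪z, u⟫).card :=
    Finset.card_pos.2 ⟨x, hxmem⟩
  omega

theorem layerNum_le_cap_bound {d : ℕ} (K₁ K₂ : Set (EuclideanSpace ℝ (Fin d)))
    (hK₁cpt : IsCompact K₁) (hK₁cvx : Convex ℝ K₁) (hK₁int : (interior K₁).Nonempty)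
    (hK₂cpt : IsCompact K₂) (hK₂cvx : Convex ℝ K₂) (hK₂int : (interior K₂).Nonempty)
    (hsub : K₂ ⊆ interior K₁)
    (X : Finset (EuclideanSpace ℝ (Fin d))) (hX : ∀ x ∈ X, x ∈ K₁)
    (m : ℕ)
    -- every cap `K₁ ∩ {x : c ≤ ⟪x,u⟫}` of `K₁ \ K₂`, i.e. whose bounding hyperplane
    -- touches the boundary of `K₂` and whose open halfspace misses `K₂`,
    -- contains at most `m` points of `X`:
    (hm : ∀ (u : EuclideanSpace ℝ (Fin d)), u ≠ 0 → ∀ c : ℝ,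
      (∃ p ∈ frontier K₂, ⟪p, u⟫ = c) →
      (∀ q ∈ K₂, ⟪q, u⟫ ≤ c) →
      (X.filter fun x => c ≤ ⟪x, u⟫).card ≤ m) :
    layerNum X ≤ m + layerNum (X.filter fun x => x ∈ K₂) := by
  have hK₂ne : K₂.Nonempty := hK₂int.mono interior_subset
  have hpeel := peel_subset_K₂ K₂ hK₂cpt hK₂cvx hK₂ne X m hm
  set Y := X.filter fun x => x ∈ K₂ with hY
  have hsubY : peel X m ⊆ Y := fun z hz =>
    Finset.mem_filter.2 ⟨peel_subset X m hz, hpeel z hz⟩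
  have hempty : peel X (m + layerNum Y) = ∅ := by
    rw [peel_add]
    have := peel_mono hsubY (layerNum Y)
    rw [layerNum_spec Y] at this
    exact Finset.subset_empty.1 this
  exact Nat.sInf_le hempty
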